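/- Let J denote the (N+r)×n matrix obtained by stacking A on top of B. Then G·J = Iₙ (G is a left inverse of J), and consequently G is a generalized inverse of J, i.e., G·J·G = G. -/

import Mathlib

open Matrix

/-- `G` is a left inverse of the stacked matrix `J = [A; B]`, and consequently a
generalized inverse of `J`: `G·J·G = G`. -/
theorem generalized_inverse_property
    (n N r : ℕ) (hn : 0 < n) (hN : 0 < N) (hr : 0 < r)
    (A : Matrix (Fin N) (Fin n) ℝ) (B : Matrix (Fin r) (Fin n) ℝ)
    (M : Matrix (Fin n ⊕ Fin r) (Fin n ⊕ Fin r) ℝ)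
    (hM : M = Matrix.fromBlocks (Aᵀ * A) Bᵀ B 0)
    (hMinv : IsUnit M)
    (G : Matrix (Fin n) (Fin N ⊕ Fin r) ℝ)
    (hG : G = (Matrix.fromCols (1 : Matrix (Fin n) (Fin n) ℝ) 0 : Matrix (Fin n) (Fin n ⊕ Fin r) ℝ) * M⁻¹ *
        Matrix.fromBlocks Aᵀ 0 0 (1 : Matrix (Fin r) (Fin r) ℝ))
    (J : Matrix (Fin N ⊕ Fin r) (Fin n) ℝ) (hJ : J = Matrix.fromRows A B) :
    G * J = (1 : Matrix (Fin n) (Fin n) ℝ) ∧ G * J * G = G := by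
  have key : M * Matrix.fromRows (1 : Matrix (Fin n) (Fin n) ℝ) (0 : Matrix (Fin r) (Fin n) ℝ) =
      Matrix.fromRows (Aᵀ * A) B := by
    rw [hM, Matrix.fromBlocks_mul_fromRows]
    simp
  have h1 : G * J = 1 := by
    rw [hG, hJ, Matrix.mul_assoc, Matrix.fromBlocks_mul_fromRows]
    simp only [Matrix.zero_mul, Matrix.mul_zero, add_zero, Matrix.one_mul, zero_add]
    rw [← key, ← Matrix.mul_assoc, Matrix.mul_assoc _ M⁻¹ M,
      Matrix.nonsing_inv_mul _ (isUnit_iff_isUnit_det M |>.mp hMinv), Matrix.mul_one,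
      Matrix.fromCols_mul_fromRows]
    simp
  exact ⟨h1, by rw [h1, Matrix.one_mul]⟩
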